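/- Let n ≥ 1, m ≥ 2 and let c be any real number with c < n. For every deterministic online allocation algorithm — that is, for every family of functions a_i : (ℝ^m)^i → Fin m for i = 1, …, n, where user i is assigned to basestation a_i(row_1, …, row_i) based on the weight rows revealed so far — there exists a nonnegative weight matrix w : Fin n → Fin m → ℝ such that the optimal offline utility max_g TS(g, w) exceeds c times the utility TS(f_a, w) of the online allocation f_a. In particular, no online algorithm has worst-case competitive ratio below n for arbitrary weights. -/

import Mathlib

open Classical in
noncomputable def advV (n m : ℕ) (a : (i : Fin n) → (Fin ((i : ℕ) + 1) → Fin m → ℝ) → Fin m)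
    (L : ℝ) : ℕ → ℕ → ℝ
  | 0, _ => 0
  | (i+1), t =>
      if t = i then
        (if ∀ (j : ℕ) (_ : j < i) (hjn : j < n),
            ((a ⟨j, hjn⟩ (fun u s => if (s : ℕ) = 0 then advV n m a L i (u : ℕ) else 0) : Fin m) : ℕ) = 0
         then L ^ i else 0)
      else advV n m a L i t

noncomputable def advW (n m : ℕ) (a : (i : Fin n) → (Fin ((i : ℕ) + 1) → Fin m → ℝ) → Fin m)
    (L : ℝ) (i : ℕ) : ℝ := advV n m a L (i + 1) i

lemma advV_stable (n m : ℕ) (a : (i : Fin n) → (Fin ((i : ℕ) + 1) → Fin m → ℝ) → Fin m)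
    (L : ℝ) : ∀ i t, t < i → advV n m a L i t = advW n m a L t := by
  intro i
  induction i with
  | zero => intro t ht; omega
  | succ i ih =>
    intro t ht
    rcases eq_or_lt_of_le (Nat.lt_succ_iff.mp ht) with h | h
    · rw [h]; rfl
    · have : advV n m a L (i+1) t = advV n m a L i t := by
        rw [advV, if_neg (Nat.ne_of_lt h)]
      rw [this]; exact ih t h

open Classical in
lemma advW_eq (n m : ℕ) (a : (i : Fin n) → (Fin ((i : ℕ) + 1) → Fin m → ℝ) → Fin m)
    (L : ℝ) (i : ℕ) :
    advW n m a L i =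
      if ∀ (j : ℕ) (_ : j < i) (hjn : j < n),
          ((a ⟨j, hjn⟩ (fun u s => if (s : ℕ) = 0 then advW n m a L (u : ℕ) else 0) : Fin m) : ℕ) = 0
      then L ^ i else 0 := by
  have hrow : ∀ (j : ℕ) (_ : j < i),
      (fun (u : Fin (j+1)) (s : Fin m) => if (s : ℕ) = 0 then advV n m a L i (u : ℕ) else 0)
    = (fun (u : Fin (j+1)) (s : Fin m) => if (s : ℕ) = 0 then advW n m a L (u : ℕ) else 0) := by
    intro j hj
    funext u s
    rw [advV_stable n m a L i (u : ℕ) (lt_of_lt_of_le u.isLt hj)]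
  show advV n m a L (i+1) i = _
  rw [advV, if_pos rfl]
  refine if_congr ⟨fun h j hj hjn => ?_, fun h j hj hjn => ?_⟩ rfl rfl
  · rw [← hrow j hj]; exact h j hj hjn
  · rw [hrow j hj]; exact h j hj hjn

/-- Time-sharing utility of an allocation `f` of `n` users to `m` basestations with
weights `w i j`: each basestation's contribution is the sum of weights of its users
divided by its degree (empty basestations contribute `0`, via `0/0 = 0`). -/
noncomputable def TS {n m : ℕ} (f : Fin n → Fin m) (w : Fin n → Fin m → ℝ) : ℝ :=
  ∑ j : Fin m, (∑ i ∈ Finset.univ.filter (fun i => f i = j), w i j) /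
    ((Finset.univ.filter (fun i => f i = j)).card : ℝ)

lemma TS_station0 {n m : ℕ} (hm : 0 < m) (v : ℕ → ℝ) (h : Fin n → Fin m) :
    TS h (fun i j => if (j : ℕ) = 0 then v (i : ℕ) else 0)
      = (∑ i ∈ Finset.univ.filter (fun i => h i = (⟨0, hm⟩ : Fin m)), v (i : ℕ)) /
        ((Finset.univ.filter (fun i => h i = (⟨0, hm⟩ : Fin m))).card : ℝ) := by
  unfold TS
  rw [Finset.sum_eq_single (⟨0, hm⟩ : Fin m)]
  · simp
  · intro b _ hb
    have hb0 : (b : ℕ) ≠ 0 := fun h0 => hb (Fin.ext h0)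
    simp [hb0]
  · intro habs; exact absurd (Finset.mem_univ _) habs

/-- arbitrary weights, worst case. For every `c < n` and every deterministic
online algorithm `a` (user `i` is assigned to `a i (row 0, …, row i)`, depending only on
the weight rows revealed so far), there is a nonnegative weight matrix `w` such that the
optimal offline utility exceeds `c` times the online utility. -/
theorem stmt5 (n m : ℕ) (hn : 1 ≤ n) (hm : 2 ≤ m) (c : ℝ) (hc : c < (n : ℝ))
    (a : (i : Fin n) → (Fin ((i : ℕ) + 1) → Fin m → ℝ) → Fin m) :
    ∃ w : Fin n → Fin m → ℝ, (∀ i j, 0 ≤ w i j) ∧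
      ∃ g : Fin n → Fin m,
        c * TS (fun i : Fin n =>
              a i (fun j : Fin ((i : ℕ) + 1) =>
                w ⟨(j : ℕ), Nat.lt_of_lt_of_le j.isLt i.isLt⟩)) w
          < TS g w := by
  have hm0 : 0 < m := by omega
  have hm1 : 1 < m := by omega
  set st0 : Fin m := ⟨0, hm0⟩ with hst0def
  set st1 : Fin m := ⟨1, hm1⟩ with hst1def
  have hst01 : st1 ≠ st0 := by
    intro h; have := congrArg Fin.val h; simp [hst0def, hst1def] at this
  -- the multiplier
  set L : ℝ := max 2 (max (c+2) ((n:ℝ)/((n:ℝ)-c) + 1)) with hLdef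
  have hL2 : (2:ℝ) ≤ L := le_max_left _ _
  have hL1 : (1:ℝ) < L := by linarith
  have hL0 : (0:ℝ) < L := by linarith
  have hLc : c + 2 ≤ L := le_trans (le_max_left _ _) (le_max_right _ _)
  have hnc : (0:ℝ) < (n:ℝ) - c := by linarith
  have hLn : (n:ℝ) < L * ((n:ℝ) - c) := by
    have h1 : (n:ℝ)/((n:ℝ)-c) + 1 ≤ L := le_trans (le_max_right _ _) (le_max_right _ _)
    have h2 : (n:ℝ)/((n:ℝ)-c) < L := by linarith
    calc (n:ℝ) = (n:ℝ)/((n:ℝ)-c) * ((n:ℝ)-c) := by field_simp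
    _ < L * ((n:ℝ)-c) := by exact mul_lt_mul_of_pos_right h2 hnc
  -- adversarial weights
  set v : ℕ → ℝ := advW n m a L with hvdef
  have hvnn : ∀ i, 0 ≤ v i := by
    intro i; rw [hvdef, advW_eq]; split
    · exact pow_nonneg (le_of_lt hL0) i
    · exact le_refl 0
  refine ⟨fun i j => if (j : ℕ) = 0 then v (i : ℕ) else 0, ?_, ?_⟩
  · intro i j; dsimp only; split
    · exact hvnn _
    · exact le_refl 0
  -- the online allocation
  set F : Fin n → Fin m :=
    (fun i : Fin n => a i (fun j : Fin ((i : ℕ) + 1) =>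
      (fun (i : Fin n) (j : Fin m) => if (j : ℕ) = 0 then v (i : ℕ) else 0)
        ⟨(j : ℕ), Nat.lt_of_lt_of_le j.isLt i.isLt⟩)) with hFdef
  have hmatch : ∀ (j : ℕ) (hjn : j < n),
      ((a ⟨j, hjn⟩ (fun u s => if (s : ℕ) = 0 then advW n m a L (u : ℕ) else 0) : Fin m) : ℕ)
        = ((F ⟨j, hjn⟩ : Fin m) : ℕ) := fun j hjn => by rw [hFdef]
  by_cases hA : ∀ i : Fin n, ((F i : Fin m) : ℕ) = 0
  · -- Case A: the algorithm assigns every user to station 0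
    have hvA : ∀ i : ℕ, v i = L ^ i := by
      intro i
      have hcondA : ∀ (j : ℕ) (_ : j < i) (hjn : j < n),
          ((a ⟨j, hjn⟩ (fun u s => if (s : ℕ) = 0 then advW n m a L (u : ℕ) else 0) : Fin m) : ℕ) = 0 := by
        intro j hj hjn; rw [hmatch j hjn]; exact hA _
      rw [hvdef, advW_eq, if_pos hcondA]
    have hfilterF : Finset.univ.filter (fun i => F i = st0) = Finset.univ := by
      apply Finset.filter_true_of_mem
      intro i _
      exact Fin.ext (hA i)
    have hlastlt : n - 1 < n := by omega
    refine ⟨fun i => if i = (⟨n-1, hlastlt⟩ : Fin n) then st0 else st1, ?_⟩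
    have hfilterg : Finset.univ.filter
        (fun i => (if i = (⟨n-1, hlastlt⟩ : Fin n) then st0 else st1) = st0) = {(⟨n-1, hlastlt⟩ : Fin n)} := by
      ext i
      simp only [Finset.mem_filter, Finset.mem_univ, true_and, Finset.mem_singleton]
      constructor
      · intro h; by_contra hne; rw [if_neg hne] at h; exact hst01 h
      · intro h; rw [if_pos h]
    rw [TS_station0 hm0 v F, TS_station0 hm0 v, hfilterF, hfilterg]
    simp only [Finset.sum_singleton, Finset.card_singleton, Finset.card_univ, Fintype.card_fin,
      Nat.cast_one, div_one]
    have hsum : ∑ i : Fin n, v (i:ℕ) = ∑ i ∈ Finset.range n, L ^ i := by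
      rw [Fin.sum_univ_eq_sum_range (fun i => v i) n]
      exact Finset.sum_congr rfl (fun i _ => hvA i)
    rw [hsum, hvA]
    set Sn := ∑ i ∈ Finset.range n, L ^ i with hSndef
    have hgeom : Sn * (L - 1) = L ^ n - 1 := geom_sum_mul L n
    have hpow : (0:ℝ) < L ^ (n-1) := pow_pos hL0 _
    have hSnn : 0 ≤ Sn := Finset.sum_nonneg fun i _ => pow_nonneg hL0.le i
    have hn0 : (0:ℝ) < (n:ℝ) := by exact_mod_cast Nat.pos_of_ne_zero (by omega)
    rcases le_or_gt c 0 with hc0 | hc0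
    · have h1 : 0 ≤ Sn / (n:ℝ) := div_nonneg hSnn hn0.le
      nlinarith
    · rw [mul_div_assoc']
      rw [div_lt_iff₀ hn0]
      have hLpow : L ^ n = L ^ (n-1) * L := by
        rw [← pow_succ]; congr 1; omega
      have hkey : c * L < (n:ℝ) * L - n := by nlinarith [hLn]
      have h3 : c * Sn * (L-1) < (L^(n-1) * (n:ℝ)) * (L - 1) := by
        have e1 : c * Sn * (L-1) = c * (L^n - 1) := by rw [mul_assoc, hgeom]
        rw [e1, hLpow]
        nlinarith [mul_lt_mul_of_pos_right hkey hpow, hc0]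
      exact (mul_lt_mul_iff_of_pos_right (by linarith : (0:ℝ) < L - 1)).mp h3
  · -- Case B: some user is refused; take the first one
    push_neg at hA
    set T := Finset.univ.filter (fun i => ((F i : Fin m) : ℕ) ≠ 0) with hTdef
    have hTne : T.Nonempty := by
      obtain ⟨i, hi⟩ := hA; exact ⟨i, by simp [hTdef, hi]⟩
    set k : Fin n := T.min' hTne with hkdef
    have hk : ((F k : Fin m) : ℕ) ≠ 0 := (Finset.mem_filter.mp (T.min'_mem hTne)).2
    have hkmin : ∀ j : Fin n, (j:ℕ) < (k:ℕ) → ((F j : Fin m) : ℕ) = 0 := by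
      intro j hj
      by_contra hne
      have hle : k ≤ j := T.min'_le j (by simp [hTdef, hne])
      exact absurd hj (not_lt.mpr hle)
    have hvle : ∀ i : ℕ, i ≤ (k:ℕ) → v i = L ^ i := by
      intro i hi
      have hcond : ∀ (j : ℕ) (_ : j < i) (hjn : j < n),
          ((a ⟨j, hjn⟩ (fun u s => if (s : ℕ) = 0 then advW n m a L (u : ℕ) else 0) : Fin m) : ℕ) = 0 := by
        intro j hj hjn
        rw [hmatch j hjn]
        exact hkmin ⟨j, hjn⟩ (by simpa using (by omega : j < (k:ℕ)))
      rw [hvdef, advW_eq, if_pos hcond]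
    have hvgt : ∀ i : ℕ, (k:ℕ) < i → v i = 0 := by
      intro i hi
      rw [hvdef, advW_eq, if_neg]
      intro hcond
      apply hk
      have h2 := hcond (k:ℕ) hi k.isLt
      rw [hmatch _ k.isLt] at h2
      simpa using h2
    refine ⟨fun i => if i = k then st0 else st1, ?_⟩
    have hfilterg : Finset.univ.filter (fun i => (if i = k then st0 else st1) = st0) = {k} := by
      ext i
      simp only [Finset.mem_filter, Finset.mem_univ, true_and, Finset.mem_singleton]
      constructor
      · intro h; by_contra hne; rw [if_neg hne] at h; exact hst01 h
      · intro h; rw [if_pos h]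
    rw [TS_station0 hm0 v F, TS_station0 hm0 v, hfilterg]
    simp only [Finset.sum_singleton, Finset.card_singleton, Nat.cast_one, div_one]
    rw [hvle (k:ℕ) le_rfl]
    set S := Finset.univ.filter (fun i => F i = st0) with hSdef
    have hkS : k ∉ S := by
      simp only [hSdef, Finset.mem_filter, Finset.mem_univ, true_and]
      intro h
      exact hk (by rw [h])
    set B := ∑ i ∈ Finset.range (k:ℕ), L ^ i with hBdef
    have hBnn : 0 ≤ B := Finset.sum_nonneg fun i _ => pow_nonneg hL0.le i
    have hsnn : 0 ≤ ∑ i ∈ S, v (i:ℕ) := Finset.sum_nonneg fun i _ => hvnn _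
    have hsum_le : ∑ i ∈ S, v (i:ℕ) ≤ B := by
      have h1 : ∑ i ∈ S, v (i:ℕ) = ∑ i ∈ S.filter (fun i : Fin n => (i : ℕ) < (k : ℕ)), v (i:ℕ) := by
        symm
        apply Finset.sum_subset (Finset.filter_subset _ _)
        intro i hiS hni
        simp only [Finset.mem_filter, hiS, true_and] at hni
        have hik : (i:ℕ) ≠ (k:ℕ) := by
          intro h
          exact hkS (by rwa [Fin.ext h] at hiS)
        exact hvgt _ (by omega)
      rw [h1]
      calc ∑ i ∈ S.filter (fun i : Fin n => (i : ℕ) < (k : ℕ)), v (i:ℕ)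
          ≤ ∑ i ∈ Finset.univ.filter (fun i : Fin n => (i:ℕ) < (k:ℕ)), v (i:ℕ) := by
            apply Finset.sum_le_sum_of_subset_of_nonneg
            · intro x hx
              simp only [Finset.mem_filter] at hx ⊢
              exact ⟨Finset.mem_univ x, hx.2⟩
            · intro i _ _; exact hvnn _
        _ = B := by
            rw [Finset.sum_filter, Fin.sum_univ_eq_sum_range
              (fun i => if i < (k:ℕ) then v i else 0) n, ← Finset.sum_filter]
            have hr : (Finset.range n).filter (fun i => i < (k:ℕ)) = Finset.range (k:ℕ) := by
              ext x
              simp only [Finset.mem_filter, Finset.mem_range]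
              have := k.isLt
              omega
            rw [hr, hBdef]
            exact Finset.sum_congr rfl (fun i hi => hvle i (by
              simp only [Finset.mem_range] at hi; omega))
    have hTSle : (∑ i ∈ S, v (i:ℕ)) / (S.card : ℝ) ≤ B := by
      rcases Nat.eq_zero_or_pos S.card with h0 | hpos
      · rw [h0]; simpa using hBnn
      · have h1 : (1:ℝ) ≤ (S.card : ℝ) := by exact_mod_cast hpos
        exact le_trans (div_le_self hsnn h1) hsum_le
    have hTSnn : 0 ≤ (∑ i ∈ S, v (i:ℕ)) / (S.card : ℝ) :=
      div_nonneg hsnn (Nat.cast_nonneg _)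
    have hgeom : B * (L - 1) = L ^ (k:ℕ) - 1 := geom_sum_mul L (k:ℕ)
    have hpk : (0:ℝ) < L ^ (k:ℕ) := pow_pos hL0 _
    set TSon := (∑ i ∈ S, v (i:ℕ)) / (S.card : ℝ) with hTSondef
    rcases le_or_gt c 0 with hc0 | hc0
    · nlinarith
    · nlinarith [mul_le_mul_of_nonneg_left hTSle hc0.le]
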